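/- Let α and β be roots of unity in ℂ with α ≠ β, and suppose the order of αβ^{-1} is a prime power p^k with k ≥ 1. Then α − β is not a unit in the ring of algebraic integers of ℚ(α, β); indeed p divides the norm of α − β. -/

import Mathlib

open Polynomial Finset

/-- Roots of unity are integral over ℤ. -/
lemma rootOfUnity_isIntegral {z : ℂ} {m : ℕ} (hm : 0 < m) (hz : z ^ m = 1) :
    IsIntegral ℤ z := by
  refine ⟨X ^ m - 1, ?_, ?_⟩
  · simpa using monic_X_pow_sub_C (1 : ℤ) hm.ne'
  · simp [hz]

/-- `p` is not a unit in the ring of algebraic integers. -/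
lemma nat_prime_not_unit_integralClosure {p : ℕ} (hp : p.Prime) :
    ¬ IsUnit ((p : ℕ) : integralClosure ℤ ℂ) := by
  intro h
  obtain ⟨u, hu⟩ := h
  have h1 : ((u⁻¹ : _) : integralClosure ℤ ℂ) * (p : integralClosure ℤ ℂ) = 1 := by
    rw [← hu]; exact u.inv_mul
  have hc : ((u⁻¹ : _) : ℂ) * (p : ℂ) = 1 := by
    have := congrArg (fun y : integralClosure ℤ ℂ => (y : ℂ)) h1
    push_cast at this ⊢
    exact this
  have hp0 : (p : ℂ) ≠ 0 := Nat.cast_ne_zero.mpr hp.pos.ne'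
  have hval : ((u⁻¹ : _) : ℂ) = algebraMap ℚ ℂ ((p : ℚ)⁻¹) := by
    have := eq_inv_of_mul_eq_one_left hc
    rw [this]
    push_cast
    rfl
  have hint : IsIntegral ℤ (algebraMap ℚ ℂ ((p : ℚ)⁻¹)) := by
    rw [← hval]; exact (u⁻¹ : _).1.2
  have hintq : IsIntegral ℤ ((p : ℚ)⁻¹) :=
    (isIntegral_algebraMap_iff (algebraMap ℚ ℂ).injective).mp hint
  obtain ⟨y, hy⟩ := IsIntegrallyClosed.isIntegral_iff.mp hintq
  have hpq0 : (p : ℚ) ≠ 0 := Nat.cast_ne_zero.mpr hp.pos.ne'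
  have : (y * p : ℤ) = (1 : ℤ) := by
    have : ((y : ℚ)) * (p : ℚ) = 1 := by
      rw [show ((y : ℚ)) = (p : ℚ)⁻¹ from hy]
      field_simp
    exact_mod_cast this
  have : (p : ℤ) ∣ 1 := ⟨y, by linarith [this]⟩
  have h2 := Int.le_of_dvd one_pos this
  have h3 : p ≤ 1 := by exact_mod_cast h2
  exact absurd h3 (by have := hp.one_lt; omega)

/-- If `α ≠ β` are roots of unity in `ℂ` whose quotient has order a prime power `p^k`
(`k ≥ 1`), then `α - β` is not a unit in the ring of algebraic integers. -/
theorem sub_not_unit_of_adjacent_roots_of_unity (α β : ℂ)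
    (hα : ∃ l : ℕ, 0 < l ∧ α ^ l = 1) (hβ : ∃ l : ℕ, 0 < l ∧ β ^ l = 1)
    (hne : α ≠ β) (p k : ℕ) (hp : p.Prime) (hk : 1 ≤ k)
    (hord : orderOf (α * β⁻¹) = p ^ k) :
    ∀ x : integralClosure ℤ ℂ, (x : ℂ) = α - β → ¬ IsUnit x := by
  intro x hx hux
  haveI : Fact p.Prime := ⟨hp⟩
  obtain ⟨l, hl, hβl⟩ := hβ
  have hβ0 : β ≠ 0 := fun h => by simp [h, zero_pow hl.ne'] at hβl
  set ζ := α * β⁻¹ with hζdef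
  have hn : 0 < p ^ k := pow_pos hp.pos k
  haveI : NeZero (p ^ k) := ⟨hn.ne'⟩
  have hζpow : ζ ^ (p ^ k) = 1 := by rw [← hord]; exact pow_orderOf_eq_one ζ
  have hζ : IsPrimitiveRoot ζ (p ^ k) := by rw [← hord]; exact IsPrimitiveRoot.orderOf ζ
  -- β and β⁻¹ are integral
  have hβint : IsIntegral ℤ β := rootOfUnity_isIntegral hl hβl
  have hβinvpow : (β⁻¹) ^ l = 1 := by rw [inv_pow, hβl, inv_one]
  have hβinvint : IsIntegral ℤ β⁻¹ := rootOfUnity_isIntegral hl hβinvpow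
  set B : integralClosure ℤ ℂ := ⟨β, hβint⟩ with hB
  set Binv : integralClosure ℤ ℂ := ⟨β⁻¹, hβinvint⟩ with hBinv
  have hBu : IsUnit Binv := IsUnit.of_mul_eq_one (a := Binv) B (by
    ext; simp [hBinv, hB, inv_mul_cancel₀ hβ0])
  -- W = β⁻¹ x  has coe  ζ - 1 ; so -W has coe 1 - ζ and is a unit
  set W : integralClosure ℤ ℂ := Binv * x with hW
  have hWcoe : (W : ℂ) = ζ - 1 := by
    have h1 : (W : ℂ) = β⁻¹ * (α - β) := by
      rw [hW]; push_cast; rw [hx]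
    rw [h1, hζdef, mul_sub, inv_mul_cancel₀ hβ0]; ring
  have hWu : IsUnit (-W) := by rw [hW]; exact (hBu.mul hux).neg
  -- each 1 - μ, for μ a primitive p^k-th root, is a unit in O
  set S := primitiveRoots (p ^ k) ℂ with hS
  have hfac : ∀ μ ∈ S, ∀ (hμi : IsIntegral ℤ μ), IsUnit ((1 : integralClosure ℤ ℂ) - ⟨μ, hμi⟩) := by
    intro μ hμS hμi
    have hμ : IsPrimitiveRoot μ (p ^ k) := (mem_primitiveRoots hn).mp hμS
    obtain ⟨m, -, hmμ⟩ := hμ.eq_pow_of_pow_eq_one hζpow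
    set M : integralClosure ℤ ℂ := ⟨μ, hμi⟩ with hM
    have hdvd : (1 : integralClosure ℤ ℂ) - M ∣ (1 : integralClosure ℤ ℂ) - M ^ m := by
      simpa using sub_dvd_pow_sub_pow (1 : integralClosure ℤ ℂ) M m
    have hEq : (1 : integralClosure ℤ ℂ) - M ^ m = -W := by
      ext
      push_cast [hWcoe, hM]
      rw [hmμ]; ring
    exact isUnit_of_dvd_unit (hEq ▸ hdvd) hWu
  -- each μ ∈ S is integral
  have hSint : ∀ μ ∈ S, IsIntegral ℤ μ := fun μ hμS =>
    rootOfUnity_isIntegral hn ((mem_primitiveRoots hn).mp hμS).pow_eq_one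
  -- the product over S of (1 - μ) in O
  set P : integralClosure ℤ ℂ := ∏ μ ∈ S.attach, ((1 : integralClosure ℤ ℂ) - ⟨μ.1, hSint μ.1 μ.2⟩) with hP
  have hPu : IsUnit P := by
    rw [hP]
    exact Finset.prod_induction _ IsUnit (fun _ _ => IsUnit.mul) isUnit_one
      (fun μ _ => hfac μ.1 μ.2 _)
  have hPcoe : (P : ℂ) = ∏ μ ∈ S, (1 - μ) := by
    rw [hP]
    push_cast
    rw [← Finset.prod_attach S (fun μ => (1 : ℂ) - μ)]
  have hprodp : ∏ μ ∈ S, ((1 : ℂ) - μ) = p := by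
    have hcyc : cyclotomic (p ^ k) ℂ = ∏ μ ∈ S, (X - C μ) :=
      cyclotomic_eq_prod_X_sub_primitiveRoots hζ
    have heval : eval 1 (cyclotomic (p ^ k) ℂ) = p := by
      obtain ⟨k', rfl⟩ : ∃ k', k = k' + 1 := ⟨k - 1, by omega⟩
      exact eval_one_cyclotomic_prime_pow k'
    rw [hcyc, eval_prod] at heval
    simpa using heval
  have hPp : P = ((p : ℕ) : integralClosure ℤ ℂ) := by
    ext
    rw [hPcoe, hprodp]
    push_cast
    rfl
  exact nat_prime_not_unit_integralClosure hp (hPp ▸ hPu)
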